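/- For a non-principal filter F on ℕ, player TWO does not have a winning strategy in the game G2(F). -/

import Mathlib

open Filter Set

/-- A strategy: maps finite sequences of the opponent's moves to a natural number. -/
abbrev Strat := List ℕ → ℕ

/-- TWO's move in inning `k` (0-indexed) when following strategy `σ` against ONE's
moves `m`: TWO has seen `m 0, …, m k`. -/
def twoFollow (σ : Strat) (m : ℕ → ℕ) (k : ℕ) : ℕ :=
  σ (List.ofFn fun i : Fin (k + 1) => m i)

/-- ONE's move in inning `k` when following strategy `σ` against TWO's moves `n`:
ONE's move depends on `n 0, …, n (k-1)` (the first move is `σ []`). -/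
def oneFollow (σ : Strat) (n : ℕ → ℕ) (k : ℕ) : ℕ :=
  σ (List.ofFn fun i : Fin k => n i)

/-- TWO wins the play `(m 0, n 0, m 1, n 1, …)` of the game `G1(F)`. -/
def TwoWins1 (F : Set (Set ℕ)) (m n : ℕ → ℕ) : Prop :=
  StrictMono n ∧ (∀ N : ℕ, ∃ k, N ≤ k ∧ m k < n k) ∧ Set.range n ∈ F

/-- TWO wins the play `(m 0, n 0, m 1, n 1, …)` of the game `G2(F)`. -/
def TwoWins2 (F : Set (Set ℕ)) (m n : ℕ → ℕ) : Prop :=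
  (∀ᶠ k in Filter.atTop, m k < n k) ∧ Set.range n ∈ F

/-- `σ` is a winning strategy for TWO in `G1(F)`. -/
def TwoWinning1 (F : Set (Set ℕ)) (σ : Strat) : Prop :=
  ∀ m : ℕ → ℕ, TwoWins1 F m (twoFollow σ m)

/-- `σ` is a winning strategy for ONE in `G1(F)`. -/
def OneWinning1 (F : Set (Set ℕ)) (σ : Strat) : Prop :=
  ∀ n : ℕ → ℕ, ¬ TwoWins1 F (oneFollow σ n) n

/-- `σ` is a winning strategy for TWO in `G2(F)`. -/
def TwoWinning2 (F : Set (Set ℕ)) (σ : Strat) : Prop :=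
  ∀ m : ℕ → ℕ, TwoWins2 F m (twoFollow σ m)

/-- `σ` is a winning strategy for ONE in `G2(F)`. -/
def OneWinning2 (F : Set (Set ℕ)) (σ : Strat) : Prop :=
  ∀ n : ℕ → ℕ, ¬ TwoWins2 F (oneFollow σ n) n

/-- `F` is a non-principal filter on `ℕ`: upward closed, closed under finite
intersections, and every member is infinite. -/
def IsNPFilter (F : Set (Set ℕ)) : Prop :=
  (∀ X ∈ F, ∀ Y : Set ℕ, X ⊆ Y → Y ∈ F) ∧
  (∀ X ∈ F, ∀ Y ∈ F, X ∩ Y ∈ F) ∧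
  (∀ X ∈ F, X.Infinite)

/-- `F` is a rare filter: every partition of `ℕ` into disjoint (nonempty) finite sets
admits a selector in `F`. -/
def IsRare (F : Set (Set ℕ)) : Prop :=
  ∀ I : ℕ → Set ℕ, (∀ n, (I n).Finite) → (∀ n, (I n).Nonempty) →
    (Pairwise fun i j => Disjoint (I i) (I j)) → (⋃ n, I n) = Set.univ →
    ∃ X ∈ F, ∀ n, (X ∩ I n).Subsingleton

/-- The subset of Cantor space `2^ℕ` corresponding to the filter `F`. -/
def cantorCoded (F : Set (Set ℕ)) : Set (ℕ → Bool) :=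
  {χ | {n | χ n = true} ∈ F}

/-- The increasing enumeration of `X ⊆ ℕ`. -/
noncomputable def enum (X : Set ℕ) : ℕ → ℕ := Nat.nth (· ∈ X)

/-- `g` eventually dominates `f`. -/
def EvDom (g f : ℕ → ℕ) : Prop := ∀ᶠ k in Filter.atTop, f k < g k

/-- TWO does not have a winning strategy in `G2(F)`. -/

noncomputable def inSup (σ : Strat) (b L : ℕ) : ℕ :=
  Finset.univ.sup fun f : Fin L → Fin (b + 1) => σ (List.ofFn fun i => (f i : ℕ))

noncomputable def bnd (σ : Strat) (b j : ℕ) : ℕ :=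
  (Finset.range (j + 2)).sup (inSup σ b)

lemma bnd_spec (σ : Strat) (b j : ℕ) (l : List ℕ) (hl : l.length ≤ j + 1)
    (hb : ∀ x ∈ l, x ≤ b) : σ l ≤ bnd σ b j := by
  have hf : ∀ i : Fin l.length, l.get i < b + 1 := fun i =>
    Nat.lt_succ_of_le (hb _ (l.get_mem i))
  have h1 : l = List.ofFn fun i : Fin l.length =>
      (((fun i => (⟨l.get i, hf i⟩ : Fin (b + 1))) i : Fin (b+1)) : ℕ) := by
    simp
  have h2 : σ l ≤ inSup σ b l.length := by
    conv_lhs => rw [h1]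
    exact Finset.le_sup (f := fun f : Fin l.length → Fin (b + 1) =>
      σ (List.ofFn fun i => (f i : ℕ))) (Finset.mem_univ _)
  exact h2.trans (Finset.le_sup (f := inSup σ b) (Finset.mem_range.mpr (by omega)))

noncomputable def tseq (σ : Strat) : ℕ → ℕ
  | 0 => 0
  | j + 1 => max (tseq σ j) (bnd σ (tseq σ j) j) + 1

lemma tseq_mono (σ : Strat) : StrictMono (tseq σ) :=
  strictMono_nat_of_lt_succ fun j => by
    have : tseq σ (j+1) = max (tseq σ j) (bnd σ (tseq σ j) j) + 1 := rfl
    omega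

lemma bnd_lt_tseq (σ : Strat) (j : ℕ) : bnd σ (tseq σ j) j < tseq σ (j + 1) := by
  have : tseq σ (j+1) = max (tseq σ j) (bnd σ (tseq σ j) j) + 1 := rfl
  omega

theorem stmt4 (F : Set (Set ℕ)) (hF : IsNPFilter F) :
    ¬ ∃ σ : Strat, TwoWinning2 F σ := by
  rintro ⟨σ, hσ⟩
  set t := tseq σ with ht
  have tm := tseq_mono σ
  set m : ℕ → ℕ := fun k => t (2 * k) with hm
  set m' : ℕ → ℕ := fun k => t (2 * k + 1) with hm'
  set n : ℕ → ℕ := twoFollow σ m with hn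
  set n' : ℕ → ℕ := twoFollow σ m' with hn'
  -- responses are trapped below the next scale point
  have hub : ∀ k, n k < t (2 * k + 1) := by
    intro k
    have hlen : (List.ofFn fun i : Fin (k + 1) => m i).length ≤ 2 * k + 1 := by
      simp only [List.length_ofFn]; omega
    have hent : ∀ x ∈ (List.ofFn fun i : Fin (k + 1) => m i), x ≤ t (2 * k) := by
      intro x hx
      simp only [List.mem_ofFn] at hx
      obtain ⟨i, rfl⟩ := hx
      exact tm.monotone (by omega : 2 * (i : ℕ) ≤ 2 * k)
    exact lt_of_le_of_lt (bnd_spec σ (t (2 * k)) (2 * k) _ hlen hent)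
      (bnd_lt_tseq σ (2 * k))
  have hub' : ∀ k, n' k < t (2 * k + 2) := by
    intro k
    have hlen : (List.ofFn fun i : Fin (k + 1) => m' i).length ≤ 2 * k + 2 := by
      simp only [List.length_ofFn]; omega
    have hent : ∀ x ∈ (List.ofFn fun i : Fin (k + 1) => m' i), x ≤ t (2 * k + 1) := by
      intro x hx
      simp only [List.mem_ofFn] at hx
      obtain ⟨i, rfl⟩ := hx
      exact tm.monotone (by omega : 2 * (i : ℕ) + 1 ≤ 2 * k + 1)
    exact lt_of_le_of_lt (bnd_spec σ (t (2 * k + 1)) (2 * k + 1) _ hlen hent)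
      (bnd_lt_tseq σ (2 * k + 1))
  obtain ⟨hd, hR⟩ := hσ m
  obtain ⟨hd', hR'⟩ := hσ m'
  rw [Filter.eventually_atTop] at hd hd'
  obtain ⟨K, hK⟩ := hd
  obtain ⟨K', hK'⟩ := hd'
  have hint : Set.range n ∩ Set.range n' ∈ F := hF.2.1 _ hR _ hR'
  have hinf := hF.2.2 _ hint
  have hfin : (Set.range n ∩ Set.range n').Finite := by
    apply Set.Finite.subset ((Set.finite_Iio K).image n |>.union
      ((Set.finite_Iio K').image n'))
    rintro x ⟨⟨k, rfl⟩, ⟨k', hk'⟩⟩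
    by_cases h1 : k < K
    · exact Or.inl ⟨k, h1, rfl⟩
    · refine Or.inr ⟨k', ?_, hk'⟩
      by_contra h2
      simp only [Set.mem_Iio, not_lt] at h2
      push_neg at h1
      have e1 : t (2 * k) < n k := hK k h1
      have e2 : n k < t (2 * k + 1) := hub k
      have e3 : t (2 * k' + 1) < n k := hk' ▸ hK' k' h2
      have e4 : n k < t (2 * k' + 2) := hk' ▸ hub' k'
      have i1 : 2 * k < 2 * k' + 2 := tm.lt_iff_lt.mp (e1.trans e4)
      have i2 : 2 * k' + 1 < 2 * k + 1 := tm.lt_iff_lt.mp (e3.trans e2)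
      omega
  exact hinf hfin
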